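/- arXiv:1804.00281 — 4 statements merged into one kernel-verified Lean document; each statement's English description precedes it below -/
import Mathlib

section
/- There exists an absolute constant C > 0 such that for all D ≥ 1, all σ with 0 < σ ≤ 1, and all x ∈ [-1,1]^D, if g is a random vector in ℝ^D whose coordinates are independent centered Gaussians of variance σ², then √D / E[‖x + g‖₂] ≤ C/σ. Consequently the smoothed complexity max_{x ∈ [-1,1]^D} √D / E[‖x+g‖₂] of amplitude encoding via fixed-point amplitude amplification is O(1/σ), independent of the dimension D. -/
open MeasureTheory ProbabilityTheory

open Real
open scoped NNReal ENNReal

lemma pi_map_eval {ι : Type*} [Fintype ι] [DecidableEq ι]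
    (μ : ι → Measure ℝ) [∀ i, IsProbabilityMeasure (μ i)] (i : ι) :
    (Measure.pi μ).map (Function.eval i) = μ i := by
  ext s hs
  rw [Measure.map_apply (measurable_pi_apply i) hs]
  have h : Function.eval i ⁻¹' s
      = Set.pi Set.univ (Function.update (fun _ => (Set.univ : Set ℝ)) i s) := by
    ext y
    simp only [Set.mem_preimage, Set.mem_pi, Set.mem_univ, forall_true_left, Function.eval]
    constructor
    · intro hy j; by_cases hj : j = i <;> simp [Function.update_apply, hj, hy]
    · intro hy; simpa using hy i
  rw [h, Measure.pi_pi]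
  calc ∏ j, (μ j) (Function.update (fun _ => (Set.univ : Set ℝ)) i s j)
      = ∏ j, if j = i then (μ i) s else (μ j) Set.univ := by
        refine Finset.prod_congr rfl fun j _ => ?_
        by_cases hj : j = i <;> simp [Function.update_apply, hj]
    _ = (μ i) s := by simp

lemma integrable_abs_mul_pdf {v : ℝ≥0} (hv : (v:ℝ) ≠ 0) (a : ℝ) :
    Integrable (fun t => |a + t| * gaussianPDFReal 0 v t) := by
  have hvpos : (0:ℝ) < v := lt_of_le_of_ne v.coe_nonneg (Ne.symm hv)
  have hb : (0:ℝ) < (2 * (v:ℝ))⁻¹ := inv_pos.mpr (by linarith)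
  have h1 : Integrable (fun t : ℝ => |a| * gaussianPDFReal 0 v t) :=
    (integrable_gaussianPDFReal 0 v).const_mul _
  have h2 : Integrable (fun t : ℝ => |t| * gaussianPDFReal 0 v t) := by
    have := (integrable_mul_exp_neg_mul_sq hb).abs
    have h3 : Integrable (fun t : ℝ => |t| * rexp (-(2 * (v:ℝ))⁻¹ * t ^ 2)) := by
      refine this.congr (ae_of_all _ fun t => ?_)
      simp only [abs_mul, abs_of_pos (Real.exp_pos _)]
    have h4 := h3.const_mul (√(2 * π * v))⁻¹
    refine h4.congr (ae_of_all _ fun t => ?_)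
    simp only [gaussianPDFReal_def]
    ring_nf
  refine Integrable.mono' (h1.add h2) ?_ (ae_of_all _ fun t => ?_)
  · exact (continuous_abs.comp (continuous_const.add continuous_id)).aestronglyMeasurable.mul
      (stronglyMeasurable_gaussianPDFReal 0 v).aestronglyMeasurable
  · simp only [Pi.add_apply, Real.norm_eq_abs, abs_mul, abs_abs,
      abs_of_nonneg (gaussianPDFReal_nonneg 0 v t), ← add_mul]
    exact mul_le_mul_of_nonneg_right (abs_add_le a t) (gaussianPDFReal_nonneg 0 v t)

lemma integrable_abs_add_gauss {v : ℝ≥0} (hv : (v:ℝ) ≠ 0) (a : ℝ) :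
    Integrable (fun t => |a + t|) (gaussianReal 0 v) := by
  have hv' : v ≠ 0 := by exact_mod_cast hv
  rw [gaussianReal_of_var_ne_zero 0 hv',
    integrable_withDensity_iff (measurable_gaussianPDF 0 v)
      (ae_of_all _ fun _ => ENNReal.ofReal_lt_top)]
  refine (integrable_abs_mul_pdf hv a).congr (ae_of_all _ fun t => ?_)
  have : gaussianPDF 0 v t = ENNReal.ofReal (gaussianPDFReal 0 v t) := rfl
  simp only [this, ENNReal.toReal_ofReal (gaussianPDFReal_nonneg 0 v t)]

lemma gauss_map_neg {v : ℝ≥0} :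
    (gaussianReal 0 v).map (fun t => -t) = gaussianReal 0 v := by
  have h : (fun t : ℝ => -t) = (fun t : ℝ => (-1 : ℝ) * t) := by funext t; ring
  rw [h, gaussianReal_map_const_mul]
  congr 1
  · ring
  · apply NNReal.coe_injective
    push_cast
    norm_num

lemma integral_abs_sub_gauss {v : ℝ≥0} (a : ℝ) :
    ∫ t, |a - t| ∂gaussianReal 0 v = ∫ t, |a + t| ∂gaussianReal 0 v := by
  conv_rhs => rw [← gauss_map_neg (v := v)]
  rw [integral_map (by fun_prop)
    (Continuous.aestronglyMeasurable (by continuity : Continuous fun t : ℝ => |a + t|))]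
  simp_rw [← sub_eq_add_neg]

lemma integral_abs_le_integral_abs_add {v : ℝ≥0} (hv : (v:ℝ) ≠ 0) (a : ℝ) :
    ∫ t, |t| ∂gaussianReal 0 v ≤ ∫ t, |a + t| ∂gaussianReal 0 v := by
  have h1 := integrable_abs_add_gauss hv a
  have h0 : Integrable (fun t => |t|) (gaussianReal 0 v) :=
    (integrable_abs_add_gauss hv 0).congr (ae_of_all _ fun t => by simp)
  have h2 : Integrable (fun t => |a - t|) (gaussianReal 0 v) := by
    refine (integrable_abs_add_gauss hv (-a)).congr (ae_of_all _ fun t => ?_)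
    show |-a + t| = |a - t|
    rw [show -a + t = -(a - t) by ring, abs_neg]
  have key : ∀ t : ℝ, |t| ≤ (|a + t| + |a - t|) / 2 := by
    intro t
    have h2t : (2:ℝ) * |t| = |(a + t) - (a - t)| := by
      rw [show (a+t) - (a-t) = 2*t by ring, abs_mul]
      norm_num
    have habs : |(a + t) - (a - t)| ≤ |a + t| + |a - t| := abs_sub _ _
    linarith
  calc ∫ t, |t| ∂gaussianReal 0 v
      ≤ ∫ t, (|a + t| + |a - t|) / 2 ∂gaussianReal 0 v :=
        integral_mono h0 ((h1.add h2).div_const 2) key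
    _ = ((∫ t, |a + t| ∂gaussianReal 0 v) + ∫ t, |a - t| ∂gaussianReal 0 v) / 2 := by
        rw [integral_div, integral_add h1 h2]
    _ = ∫ t, |a + t| ∂gaussianReal 0 v := by rw [integral_abs_sub_gauss]; ring

lemma integral_abs_gauss_scale {σ : ℝ} (hσ : 0 < σ) :
    ∫ t, |t| ∂gaussianReal 0 ⟨σ^2, sq_nonneg σ⟩
      = σ * ∫ t, |t| ∂gaussianReal 0 1 := by
  have h : gaussianReal 0 ⟨σ^2, sq_nonneg σ⟩ = (gaussianReal 0 1).map (fun t => σ * t) := by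
    rw [gaussianReal_map_const_mul]
    congr 1
    · ring
    · apply NNReal.coe_injective; push_cast; ring_nf; rfl
  rw [h, integral_map (by fun_prop) continuous_abs.aestronglyMeasurable]
  simp_rw [abs_mul, abs_of_pos hσ, integral_const_mul]

lemma K_pos : 0 < ∫ t, |t| ∂gaussianReal 0 1 := by
  have hv : ((1:ℝ≥0):ℝ) ≠ 0 := by norm_num
  have hint : Integrable (fun t : ℝ => |t|) (gaussianReal 0 1) :=
    (integrable_abs_add_gauss hv 0).congr (ae_of_all _ fun t => by simp)
  rw [integral_pos_iff_support_of_nonneg (fun t => abs_nonneg t) hint]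
  have hs : Function.support (fun t : ℝ => |t|) = {(0:ℝ)}ᶜ := by
    ext t; simp [Function.support]
  rw [hs]
  have h0 : gaussianReal 0 1 {0} = 0 :=
    gaussianReal_absolutelyContinuous 0 one_ne_zero Real.volume_singleton
  rw [measure_compl (measurableSet_singleton 0) (measure_ne_top _ _), h0, measure_univ]
  simp

/-- The `D`-fold product of the centered one-dimensional Gaussian measure of variance `σ²`:
the distribution of a random vector in `ℝ^D` with independent `N(0,σ²)` coordinates. -/
noncomputable def gaussPi (D : ℕ) (σ : ℝ) : Measure (Fin D → ℝ) :=
  Measure.pi fun _ => gaussianReal 0 ⟨σ ^ 2, sq_nonneg σ⟩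

/-- Theorem 1 of the paper: there is an absolute constant `C > 0` such that for
every `D ≥ 1`, every `0 < σ ≤ 1` and every `x ∈ [-1,1]^D`, the smoothed query cost
`√D / E_g[‖x+g‖₂]` of amplitude encoding via fixed-point amplitude amplification is at most
`C/σ`, independently of the dimension `D`. -/
theorem smoothed_amplitude_encoding :
    ∃ C : ℝ, 0 < C ∧
      ∀ (D : ℕ), 1 ≤ D → ∀ σ : ℝ, 0 < σ → σ ≤ 1 →
        ∀ x : Fin D → ℝ, (∀ i, |x i| ≤ 1) →
          Real.sqrt D / (∫ g, Real.sqrt (∑ i, (x i + g i) ^ 2) ∂(gaussPi D σ)) ≤ C / σ := by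
  set K := ∫ t, |t| ∂gaussianReal 0 1 with hKdef
  have hK : 0 < K := K_pos
  refine ⟨K⁻¹, inv_pos.mpr hK, ?_⟩
  intro D hD σ hσ hσ1 x hx
  set v : ℝ≥0 := ⟨σ ^ 2, sq_nonneg σ⟩ with hvdef
  have hvne : (v : ℝ) ≠ 0 := by simp only [hvdef, NNReal.coe_mk]; exact (pow_pos hσ 2).ne'
  set π' : Measure (Fin D → ℝ) := gaussPi D σ with hπ
  have hprob : ∀ i : Fin D, IsProbabilityMeasure (gaussianReal (0:ℝ) v) := fun _ => inferInstance
  have hmap : ∀ i : Fin D, π'.map (Function.eval i) = gaussianReal 0 v := fun i =>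
    @pi_map_eval _ _ _ _ hprob i
  have hco_int : ∀ i : Fin D, Integrable (fun g : Fin D → ℝ => |x i + g i|) π' := by
    intro i
    have h := integrable_abs_add_gauss hvne (x i)
    rw [← hmap i] at h
    exact (integrable_map_measure
      (Continuous.aestronglyMeasurable (by continuity : Continuous fun t : ℝ => |x i + t|))
      (measurable_pi_apply i).aemeasurable).mp h
  have hco_lb : ∀ i : Fin D, σ * K ≤ ∫ g, |x i + g i| ∂π' := by
    intro i
    have h1 : ∫ g, |x i + g i| ∂π' = ∫ t, |x i + t| ∂gaussianReal 0 v := by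
      rw [← hmap i, integral_map (measurable_pi_apply i).aemeasurable
        (Continuous.aestronglyMeasurable (by continuity : Continuous fun t : ℝ => |x i + t|))]
    rw [h1]
    calc σ * K = ∫ t, |t| ∂gaussianReal 0 v := (integral_abs_gauss_scale hσ).symm
      _ ≤ _ := integral_abs_le_integral_abs_add hvne (x i)
  set f : (Fin D → ℝ) → ℝ := fun g => Real.sqrt (∑ i, (x i + g i) ^ 2) with hf
  set F : (Fin D → ℝ) → ℝ := fun g => ∑ i, |x i + g i| with hF
  have hFnonneg : ∀ g, 0 ≤ F g := fun g => Finset.sum_nonneg fun i _ => abs_nonneg _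
  have hFint : Integrable F π' := integrable_finset_sum _ fun i _ => hco_int i
  have hfF : ∀ g, f g ≤ F g := by
    intro g
    have h1 : ∑ i, (x i + g i) ^ 2 ≤ (∑ i, |x i + g i|) ^ 2 := by
      have := Finset.sum_sq_le_sq_sum_of_nonneg
        (s := Finset.univ) (f := fun i : Fin D => |x i + g i|) (fun i _ => abs_nonneg _)
      simpa [sq_abs] using this
    calc f g ≤ Real.sqrt ((∑ i, |x i + g i|) ^ 2) := Real.sqrt_le_sqrt h1
      _ = F g := Real.sqrt_sq (hFnonneg g)
  have hfcont : Continuous f := by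
    apply Real.continuous_sqrt.comp
    exact continuous_finset_sum _ fun i _ => (continuous_const.add (continuous_apply i)).pow 2
  have hfint : Integrable f π' := by
    refine hFint.mono' hfcont.aestronglyMeasurable (ae_of_all _ fun g => ?_)
    rw [Real.norm_eq_abs, abs_of_nonneg (Real.sqrt_nonneg _)]
    exact hfF g
  have hDpos : (0:ℝ) < D := by exact_mod_cast Nat.lt_of_lt_of_le Nat.zero_lt_one hD
  have hsD : (0:ℝ) < Real.sqrt D := Real.sqrt_pos.mpr hDpos
  have hlow : ∀ g, F g / Real.sqrt D ≤ f g := by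
    intro g
    rw [div_le_iff₀ hsD]
    have h1 : (F g) ^ 2 ≤ (D:ℝ) * ∑ i, (x i + g i) ^ 2 := by
      have := sq_sum_le_card_mul_sum_sq
        (s := Finset.univ) (f := fun i : Fin D => |x i + g i|)
      simpa [sq_abs] using this
    calc F g = Real.sqrt ((F g) ^ 2) := (Real.sqrt_sq (hFnonneg g)).symm
      _ ≤ Real.sqrt ((D:ℝ) * ∑ i, (x i + g i) ^ 2) := Real.sqrt_le_sqrt h1
      _ = f g * Real.sqrt D := by
          rw [Real.sqrt_mul (le_of_lt hDpos), hf, mul_comm]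
  have hsum : ∫ g, F g ∂π' = ∑ i, ∫ g, |x i + g i| ∂π' :=
    integral_finset_sum _ fun i _ => hco_int i
  have h1 : (D:ℝ) * (σ * K) ≤ ∫ g, F g ∂π' := by
    rw [hsum]
    calc (D:ℝ) * (σ * K) = ∑ _i : Fin D, σ * K := by
          rw [Finset.sum_const, Finset.card_univ, Fintype.card_fin, nsmul_eq_mul]
      _ ≤ ∑ i, ∫ g, |x i + g i| ∂π' := Finset.sum_le_sum fun i _ => hco_lb i
  have h2 : (∫ g, F g ∂π') / Real.sqrt D ≤ ∫ g, f g ∂π' := by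
    rw [← integral_div]
    exact integral_mono (hFint.div_const _) hfint hlow
  have hE : Real.sqrt D * (σ * K) ≤ ∫ g, f g ∂π' := by
    refine le_trans ?_ h2
    rw [le_div_iff₀ hsD]
    calc Real.sqrt D * (σ * K) * Real.sqrt D = (D:ℝ) * (σ * K) := by
          rw [mul_comm (Real.sqrt D * (σ * K)), ← mul_assoc,
            Real.mul_self_sqrt (le_of_lt hDpos)]
      _ ≤ _ := h1
  have hEpos : 0 < ∫ g, f g ∂π' := lt_of_lt_of_le (by positivity) hE
  calc Real.sqrt D / (∫ g, f g ∂π')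
      ≤ Real.sqrt D / (Real.sqrt D * (σ * K)) :=
        div_le_div_of_nonneg_left (le_of_lt hsD) (by positivity) hE
    _ = K⁻¹ / σ := by
        rw [div_mul_eq_div_div, div_self hsD.ne', one_div, mul_inv, div_eq_mul_inv, mul_comm]
end

section
/- There exists an absolute constant C > 0 such that for all D ≥ 3, all σ > 0, and all x ∈ [-1,1]^D, if g is a random vector in ℝ^D whose coordinates are independent centered Gaussians of variance σ², then D · E[1/‖x + g‖₂²] ≤ C/σ². Consequently the smoothed complexity of classical rejection sampling for ℓ₂-sampling, whose expected runtime on input y is D/‖y‖₂², is O(1/σ²), independent of the dimension D. -/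
open MeasureTheory ProbabilityTheory

section Aux
open Real Set
open scoped ENNReal NNReal


lemma exp_tendsto {s : ℝ} (hs : 0 < s) :
    Filter.Tendsto (fun t : ℝ => Real.exp (-(t*s))) Filter.atTop (nhds 0) := by
  apply Real.tendsto_exp_atBot.comp
  exact Filter.tendsto_atBot_mono (fun t => le_refl _)
    (Filter.tendsto_neg_atTop_atBot.comp (Filter.Tendsto.atTop_mul_const hs Filter.tendsto_id))

lemma lint_exp_deriv {s : ℝ} (hs : 0 < s) : ∀ t ∈ Ici (0:ℝ),
    HasDerivAt (fun t => -(Real.exp (-(t*s)))/s) (Real.exp (-(t*s))) t := by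
  intro t _
  have h1 : HasDerivAt (fun t : ℝ => -(t*s)) (-s) t := by
    simpa using ((hasDerivAt_id t).mul_const s).fun_neg
  have h3 := ((Real.hasDerivAt_exp (-(t*s))).comp t h1).fun_neg.div_const s
  refine h3.congr_deriv ?_
  field_simp

lemma int_exp {s : ℝ} (hs : 0 < s) :
    (∫ t in Set.Ioi (0:ℝ), Real.exp (-(t*s))) = s⁻¹ := by
  have htend : Filter.Tendsto (fun t : ℝ => -(Real.exp (-(t*s)))/s) Filter.atTop (nhds 0) := by
    have := ((exp_tendsto hs).neg).div_const s
    simpa using this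
  have := integral_Ioi_of_hasDerivAt_of_nonneg' (lint_exp_deriv hs)
    (fun t _ => (Real.exp_pos _).le) htend
  rw [this]
  simp [div_eq_mul_inv]

lemma intOn_exp {s : ℝ} (hs : 0 < s) :
    IntegrableOn (fun t : ℝ => Real.exp (-(t*s))) (Set.Ioi (0:ℝ)) := by
  have htend : Filter.Tendsto (fun t : ℝ => -(Real.exp (-(t*s)))/s) Filter.atTop (nhds 0) := by
    have := ((exp_tendsto hs).neg).div_const s
    simpa using this
  exact integrableOn_Ioi_deriv_of_nonneg' (lint_exp_deriv hs)
    (fun t _ => (Real.exp_pos _).le) htend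

lemma lint_exp {s : ℝ} (hs : 0 < s) :
    ∫⁻ t in Set.Ioi (0:ℝ), ENNReal.ofReal (Real.exp (-(t*s))) = ENNReal.ofReal s⁻¹ := by
  rw [← ofReal_integral_eq_lintegral_ofReal (intOn_exp hs)
    (Filter.Eventually.of_forall fun t => (Real.exp_pos _).le), int_exp hs]

section powint
variable {b p : ℝ}

lemma pow_deriv (hb : 0 < b) (hp : 1 < p) : ∀ t ∈ Ici (0:ℝ),
    HasDerivAt (fun t : ℝ => -((1+b*t) ^ (1-p))/(b*(p-1))) ((1+b*t) ^ (-p)) t := by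
  intro t ht
  have hbase : (0:ℝ) < 1 + b*t := by nlinarith [ht.out]
  have h1 : HasDerivAt (fun t : ℝ => 1 + b*t) b t := by
    simpa using ((hasDerivAt_id t).const_mul b).const_add 1
  have h2 := (Real.hasDerivAt_rpow_const (x := 1+b*t) (p := 1-p) (Or.inl hbase.ne')).comp t h1
  have h3 := h2.fun_neg.div_const (b*(p-1))
  refine h3.congr_deriv ?_
  rw [show (1:ℝ) - p - 1 = -p by ring]
  have hne : b*(p-1) ≠ 0 := by nlinarith
  have hp1 : p - 1 ≠ 0 := by linarith
  field_simp
  ring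

lemma pow_tendsto (hb : 0 < b) (hp : 1 < p) :
    Filter.Tendsto (fun t : ℝ => -((1+b*t) ^ (1-p))/(b*(p-1))) Filter.atTop (nhds 0) := by
  have h0 : Filter.Tendsto (fun t : ℝ => 1 + b*t) Filter.atTop Filter.atTop := by
    apply Filter.tendsto_atTop_add_const_left
    exact Filter.Tendsto.const_mul_atTop hb Filter.tendsto_id
  have h1 : Filter.Tendsto (fun t : ℝ => (1+b*t) ^ (1-p)) Filter.atTop (nhds 0) := by
    have := (tendsto_rpow_neg_atTop (y := p-1) (by linarith)).comp h0
    simpa [Function.comp_def, neg_sub] using this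
  simpa using h1.neg.div_const (b*(p-1))

lemma int_pow (hb : 0 < b) (hp : 1 < p) :
    (∫ t in Set.Ioi (0:ℝ), (1+b*t) ^ (-p)) = (b*(p-1))⁻¹ := by
  have := integral_Ioi_of_hasDerivAt_of_nonneg' (pow_deriv hb hp)
    (fun t ht => Real.rpow_nonneg (by nlinarith [le_of_lt ht.out]) _) (pow_tendsto hb hp)
  rw [this]
  simp [Real.one_rpow, div_eq_mul_inv]

lemma intOn_pow (hb : 0 < b) (hp : 1 < p) :
    IntegrableOn (fun t : ℝ => (1+b*t) ^ (-p)) (Set.Ioi (0:ℝ)) :=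
  integrableOn_Ioi_deriv_of_nonneg' (pow_deriv hb hp)
    (fun t ht => Real.rpow_nonneg (by nlinarith [le_of_lt ht.out]) _) (pow_tendsto hb hp)

lemma lint_pow (hb : 0 < b) (hp : 1 < p) :
    ∫⁻ t in Set.Ioi (0:ℝ), ENNReal.ofReal ((1+b*t) ^ (-p)) = ENNReal.ofReal ((b*(p-1))⁻¹) := by
  rw [← ofReal_integral_eq_lintegral_ofReal (intOn_pow hb hp)
    ((ae_restrict_iff' measurableSet_Ioi).2 (Filter.Eventually.of_forall
      fun t ht => Real.rpow_nonneg (by nlinarith [le_of_lt ht.out]) _)), int_pow hb hp]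

end powint

lemma lintegral_pi_prod {n : ℕ} (μ : Measure ℝ) [SigmaFinite μ]
    (f : Fin n → ℝ → ℝ≥0∞) (hf : ∀ i, Measurable (f i)) :
    ∫⁻ g : Fin n → ℝ, ∏ i, f i (g i) ∂Measure.pi (fun _ => μ)
      = ∏ i, ∫⁻ y, f i y ∂μ := by
  induction n with
  | zero => simp [Measure.pi_of_empty]
  | succ n ih =>
    have hmp := (measurePreserving_piFinSuccAbove (fun _ : Fin (n+1) => μ) 0).symm
    rw [← hmp.lintegral_comp_emb (MeasurableEquiv.measurableEmbedding _)]
    simp_rw [MeasurableEquiv.piFinSuccAbove_symm_apply, Fin.insertNthEquiv,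
      Fin.prod_univ_succ, Fin.insertNth_zero, Equiv.coe_fn_mk, Fin.cons_zero, Fin.cons_succ]
    simp only [cast_eq]
    rw [lintegral_prod_mul (f := f 0) (g := fun a : Fin n → ℝ => ∏ x : Fin n, f x.succ (a x))
      (hf 0).aemeasurable (Measurable.aemeasurable (by measurability)),
      ih (fun i => f i.succ) (fun i => hf i.succ)]

lemma meas_exp_quad (t x : ℝ) : Measurable fun y : ℝ => ENNReal.ofReal (Real.exp (-(t*(x+y)^2))) := by
  apply Measurable.ennreal_ofReal
  exact Real.measurable_exp.comp ((((measurable_const.add measurable_id).pow_const 2).const_mul t).neg)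

set_option maxHeartbeats 1000000 in
lemma coord_bound {σ : ℝ} (hσ : 0 < σ) {t : ℝ} (ht : 0 ≤ t) (x : ℝ) :
    ∫⁻ y, ENNReal.ofReal (Real.exp (-(t*(x+y)^2))) ∂(gaussianReal 0 ⟨σ^2, sq_nonneg σ⟩)
      ≤ ENNReal.ofReal (Real.sqrt ((1+2*σ^2*t)⁻¹)) := by
  set v : ℝ≥0 := ⟨σ^2, sq_nonneg σ⟩ with hv_def
  have hv : v ≠ 0 := by
    intro h
    have : σ^2 = 0 := congrArg NNReal.toReal h
    nlinarith
  obtain ⟨a, ha, haeq⟩ : ∃ a : ℝ, 0 < a ∧ a = t + (2*σ^2)⁻¹ :=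
    ⟨t + (2*σ^2)⁻¹, by positivity, rfl⟩
  have hcoe : (v : ℝ) = σ^2 := rfl
  rw [gaussianReal_of_var_ne_zero 0 hv,
    lintegral_withDensity_eq_lintegral_mul _ (measurable_gaussianPDF 0 v)
      (meas_exp_quad t x)]
  have hptwise : ∀ y : ℝ,
      (gaussianPDF 0 v * fun y => ENNReal.ofReal (Real.exp (-(t*(x+y)^2)))) y
        ≤ ENNReal.ofReal ((Real.sqrt (2*π*σ^2))⁻¹ * Real.exp (-(a*(y+t*x/a)^2))) := by
    intro y
    simp only [Pi.mul_apply, gaussianPDF, gaussianPDFReal, hcoe, sub_zero]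
    rw [← ENNReal.ofReal_mul (by positivity)]
    apply ENNReal.ofReal_le_ofReal
    rw [mul_assoc, ← Real.exp_add]
    apply mul_le_mul_of_nonneg_left _ (by positivity)
    apply Real.exp_le_exp.2
    have key : -y^2/(2*σ^2) + -(t*(x+y)^2) + t*x^2/(2*σ^2*a) = -(a*(y+t*x/a)^2) := by
      rw [haeq]
      have h1 : (2*σ^2) ≠ 0 := by positivity
      have h2 : t + (2*σ^2)⁻¹ ≠ 0 := by rw [← haeq]; exact ha.ne'
      field_simp
      ring
    have hnn : 0 ≤ t*x^2/(2*σ^2*a) := by positivity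
    linarith
  calc ∫⁻ y, (gaussianPDF 0 v * fun y => ENNReal.ofReal (Real.exp (-(t*(x+y)^2)))) y
      ≤ ∫⁻ y, ENNReal.ofReal ((Real.sqrt (2*π*σ^2))⁻¹ * Real.exp (-(a*(y+t*x/a)^2))) :=
        lintegral_mono hptwise
    _ = ENNReal.ofReal (∫ y, (Real.sqrt (2*π*σ^2))⁻¹ * Real.exp (-(a*(y+t*x/a)^2))) := by
        rw [ofReal_integral_eq_lintegral_ofReal]
        · have hI := ((integrable_exp_neg_mul_sq ha).comp_add_right (t*x/a)).const_mul
            (Real.sqrt (2*π*σ^2))⁻¹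
          simpa [neg_mul] using hI
        · exact Filter.Eventually.of_forall fun y => by positivity
    _ ≤ ENNReal.ofReal (Real.sqrt ((1+2*σ^2*t)⁻¹)) := by
        apply ENNReal.ofReal_le_ofReal
        rw [MeasureTheory.integral_const_mul]
        have h1 : ∫ y, Real.exp (-(a*(y+t*x/a)^2)) = Real.sqrt (π/a) := by
          have h0 := MeasureTheory.integral_add_right_eq_self (μ := (volume : Measure ℝ))
            (fun y : ℝ => Real.exp (-(a*y^2))) (t*x/a)
          rw [h0, show (fun y : ℝ => Real.exp (-(a*y^2))) = fun y : ℝ => Real.exp (-a*y^2) by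
            funext y; ring_nf, integral_gaussian]
        rw [h1]
        have h2 : (1+2*σ^2*t)⁻¹ = (π/a) * (2*π*σ^2)⁻¹ := by
          rw [haeq]
          have h1' : (2*σ^2) ≠ 0 := by positivity
          have h2' : t + (2*σ^2)⁻¹ ≠ 0 := by rw [← haeq]; exact ha.ne'
          have hπ : π ≠ 0 := Real.pi_ne_zero
          field_simp
          ring
        rw [h2, Real.sqrt_mul (by positivity : (0:ℝ) ≤ π/a), Real.sqrt_inv,
          Real.sqrt_mul (by positivity : (0:ℝ) ≤ 2*π)]
        exact le_of_eq (mul_comm _ _)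


end Aux

open Real Set in
open scoped ENNReal NNReal in
/-- there is an absolute constant `C > 0` such that for every `D ≥ 3`, every
`σ > 0` and every `x ∈ [-1,1]^D`, the smoothed expected runtime `D · E_g[1/‖x+g‖₂²]` of
classical rejection sampling for `ℓ₂`-sampling is at most `C/σ²`, independently of `D`. -/
theorem smoothed_rejection_sampling :
    ∃ C : ℝ, 0 < C ∧
      ∀ (D : ℕ), 3 ≤ D → ∀ σ : ℝ, 0 < σ →
        ∀ x : Fin D → ℝ, (∀ i, |x i| ≤ 1) →
          (D : ℝ) * (∫ g, (∑ i, (x i + g i) ^ 2)⁻¹ ∂(gaussPi D σ)) ≤ C / σ ^ 2 := by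
  refine ⟨3, by norm_num, fun D hD σ hσ x _ => ?_⟩
  set v : ℝ≥0 := ⟨σ^2, sq_nonneg σ⟩ with hv_def
  have hv : v ≠ 0 := by
    intro h
    have : σ^2 = 0 := congrArg NNReal.toReal h
    nlinarith
  set γ : Measure ℝ := gaussianReal 0 v with hγ_def
  haveI : NullSingletonClass γ := by
    constructor
    intro a
    rw [hγ_def, gaussianReal_of_var_ne_zero 0 hv,
      withDensity_apply _ (measurableSet_singleton a),
      Measure.restrict_eq_zero.2 (measure_singleton a)]
    simp
  set μ : Measure (Fin D → ℝ) := gaussPi D σ with hμ_def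
  have hμγ : μ = Measure.pi fun _ : Fin D => γ := rfl
  set S : (Fin D → ℝ) → ℝ := fun g => ∑ i, (x i + g i)^2 with hS_def
  have hSmeas : Measurable S :=
    Finset.measurable_sum _ fun i _ =>
      ((measurable_const.add (measurable_pi_apply i)).pow_const 2)
  have hDcast : (3:ℝ) ≤ (D:ℝ) := by exact_mod_cast hD
  have i0 : Fin D := ⟨0, by omega⟩
  have haepos : ∀ᵐ g ∂μ, 0 < S g := by
    rw [hμγ]
    filter_upwards [Measure.ae_eval_ne (fun _ : Fin D => γ) i0 (-x i0)] with g hg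
    have h1 : x i0 + g i0 ≠ 0 := fun h => hg (by linarith [h])
    have h2 : 0 < (x i0 + g i0)^2 := by positivity
    refine lt_of_lt_of_le h2 ?_
    exact Finset.single_le_sum (f := fun i => (x i + g i)^2)
      (fun i _ => sq_nonneg _) (Finset.mem_univ i0)
  -- step 1 : Bochner integral to lintegral
  haveI : IsProbabilityMeasure μ := by
    rw [hμγ]; infer_instance
  have hstep1 : ∫ g, (S g)⁻¹ ∂μ = (∫⁻ g, ENNReal.ofReal ((S g)⁻¹) ∂μ).toReal := by
    apply integral_eq_lintegral_of_nonneg_ae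
    · filter_upwards [haepos] with g hg; positivity
    · exact hSmeas.inv.aestronglyMeasurable
  -- swap
  have hunc : Measurable (Function.uncurry fun (g : Fin D → ℝ) (t : ℝ) =>
      ENNReal.ofReal (Real.exp (-(t * S g)))) := by
    apply Measurable.ennreal_ofReal
    exact Real.measurable_exp.comp
      ((measurable_snd.mul (hSmeas.comp measurable_fst)).neg)
  have hkey : ∫⁻ g, ENNReal.ofReal ((S g)⁻¹) ∂μ
      = ∫⁻ t in Set.Ioi (0:ℝ), ∫⁻ g, ENNReal.ofReal (Real.exp (-(t * S g))) ∂μ := by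
    rw [← lintegral_lintegral_swap hunc.aemeasurable]
    apply lintegral_congr_ae
    filter_upwards [haepos] with g hg
    have := lint_exp hg
    rw [← this]
  -- bound inner integrals
  have hp : 1 < (D:ℝ)/2 := by linarith
  have hb : (0:ℝ) < 2*σ^2 := by positivity
  have hbound : ∫⁻ t in Set.Ioi (0:ℝ), ∫⁻ g, ENNReal.ofReal (Real.exp (-(t * S g))) ∂μ
      ≤ ENNReal.ofReal ((2*σ^2*((D:ℝ)/2-1))⁻¹) := by
    rw [← lint_pow hb hp]
    apply lintegral_mono_ae
    filter_upwards [ae_restrict_mem measurableSet_Ioi] with t ht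
    have hu : (0:ℝ) < 1+2*σ^2*t := by nlinarith [ht.out]
    calc ∫⁻ g, ENNReal.ofReal (Real.exp (-(t * S g))) ∂μ
        = ∫⁻ g, ∏ i, ENNReal.ofReal (Real.exp (-(t*(x i + g i)^2))) ∂μ := by
          apply lintegral_congr; intro g
          rw [← ENNReal.ofReal_prod_of_nonneg (fun i _ => (Real.exp_pos _).le),
            ← Real.exp_sum]
          congr 1
          rw [hS_def, Finset.mul_sum]
          simp
      _ = ∏ i, ∫⁻ y, ENNReal.ofReal (Real.exp (-(t*(x i + y)^2))) ∂γ := by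
          rw [hμγ]; exact lintegral_pi_prod γ _ (fun i => meas_exp_quad t (x i))
      _ ≤ ∏ _i : Fin D, ENNReal.ofReal (Real.sqrt ((1+2*σ^2*t)⁻¹)) :=
          Finset.prod_le_prod' (fun i _ => coord_bound hσ (le_of_lt ht.out) (x i))
      _ = ENNReal.ofReal ((1+2*σ^2*t) ^ (-((D:ℝ)/2))) := by
          rw [Finset.prod_const, Finset.card_univ, Fintype.card_fin,
            ← ENNReal.ofReal_pow (Real.sqrt_nonneg _)]
          congr 1
          rw [Real.sqrt_eq_rpow, ← Real.rpow_natCast (((1+2*σ^2*t)⁻¹) ^ ((1:ℝ)/2)) D,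
            ← Real.rpow_mul (inv_nonneg.2 hu.le), Real.inv_rpow hu.le,
            ← Real.rpow_neg hu.le]
          congr 1
          ring
  -- put together
  have hBnn : (0:ℝ) ≤ (2*σ^2*((D:ℝ)/2-1))⁻¹ := by
    apply inv_nonneg.2; nlinarith
  have hfinal : ∫ g, (S g)⁻¹ ∂μ ≤ (2*σ^2*((D:ℝ)/2-1))⁻¹ := by
    rw [hstep1]
    apply ENNReal.toReal_le_of_le_ofReal hBnn
    rw [hkey]; exact hbound
  calc (D:ℝ) * ∫ g, (S g)⁻¹ ∂μ
      ≤ (D:ℝ) * (2*σ^2*((D:ℝ)/2-1))⁻¹ := by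
        apply mul_le_mul_of_nonneg_left hfinal (by positivity)
    _ = (D:ℝ) / (σ^2*((D:ℝ)-2)) := by
        rw [div_eq_mul_inv]; congr 1; ring
    _ ≤ 3 / σ^2 := by
        rw [div_le_div_iff₀ (by nlinarith) (by positivity)]
        nlinarith [sq_nonneg σ, mul_pos hσ hσ]
end

section
/- Let D ≥ 2, let g be a random vector in ℝ^D whose coordinates are independent centered Gaussians of variance σ² > 0, and let x ∈ ℝ^D be any fixed vector. Then E[1/‖x + g‖₂] ≤ E[1/‖g‖₂]. -/
open MeasureTheory ProbabilityTheory

section AuxSqrtInvShift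

open Real
open scoped ENNReal NNReal

lemma my_lintegral_pi_prod {D : ℕ} (m : Measure ℝ) [SigmaFinite m]
    (f : Fin D → ℝ → ℝ≥0∞) (hf : ∀ i, Measurable (f i)) :
    ∫⁻ x : Fin D → ℝ, ∏ i, f i (x i) ∂Measure.pi (fun _ => m) = ∏ i, ∫⁻ u, f i u ∂m := by
  induction D with
  | zero => simp [Measure.pi_of_empty]
  | succ n ih =>
    have h := ((measurePreserving_piFinSuccAbove (fun _ : Fin (n+1) => m) 0).symm)
    rw [← h.lintegral_comp_emb (MeasurableEquiv.measurableEmbedding _)]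
    simp_rw [MeasurableEquiv.piFinSuccAbove_symm_apply, Fin.insertNthEquiv,
      Fin.prod_univ_succ, Fin.insertNth_zero]
    simp only [Fin.zero_succAbove, Function.comp_def, Equiv.coe_fn_mk, Fin.cons_zero,
      Fin.cons_succ, cast_eq]
    have h2 : AEMeasurable (fun y : Fin n → ℝ => ∏ x : Fin n, f x.succ (y x))
        (Measure.pi fun _ => m) :=
      (Finset.measurable_prod _ (fun i _ => (hf i.succ).comp (measurable_pi_apply i))).aemeasurable
    rw [lintegral_prod_mul (hf 0).aemeasurable h2, ih (fun i => f i.succ) (fun i => hf _)]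

lemma one_dim_le {σ : ℝ} (hσ : 0 < σ) (s c : ℝ) (hs : 0 ≤ s) :
    ∫⁻ u, ENNReal.ofReal (Real.exp (-(s * (c + u) ^ 2))) ∂(gaussianReal 0 ⟨σ ^ 2, sq_nonneg σ⟩)
      ≤ ∫⁻ u, ENNReal.ofReal (Real.exp (-(s * u ^ 2))) ∂(gaussianReal 0 ⟨σ ^ 2, sq_nonneg σ⟩) := by
  have hσ2 : (0:ℝ) < σ ^ 2 := by positivity
  have hv : (⟨σ ^ 2, sq_nonneg σ⟩ : ℝ≥0) ≠ 0 := fun h =>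
    hσ2.ne' (congrArg NNReal.toReal h)
  rw [gaussianReal_of_var_ne_zero _ hv,
    lintegral_withDensity_eq_lintegral_mul _ (measurable_gaussianPDF 0 (⟨σ ^ 2, sq_nonneg σ⟩ : ℝ≥0)) (by fun_prop),
    lintegral_withDensity_eq_lintegral_mul _ (measurable_gaussianPDF 0 (⟨σ ^ 2, sq_nonneg σ⟩ : ℝ≥0)) (by fun_prop)]
  set v : ℝ := σ ^ 2 with hvdef
  have hv0 : (0:ℝ) < v := hσ2
  set K : ℝ := (Real.sqrt (2 * π * v))⁻¹ with hK
  have hK0 : 0 ≤ K := by positivity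
  set B : ℝ := s + (2 * v)⁻¹ with hB
  have hB0 : (0:ℝ) < B := by positivity
  set m : ℝ := s * c / B with hm
  set k : ℝ := s * c ^ 2 - s ^ 2 * c ^ 2 / B with hk
  have hk0 : 0 ≤ k := by
    rw [hk, sub_nonneg, div_le_iff₀ hB0, hB]
    have h1 : 0 ≤ s * c ^ 2 * (2 * v)⁻¹ := by positivity
    nlinarith
  have pdf_eq : ∀ u : ℝ, gaussianPDF 0 ⟨σ ^ 2, sq_nonneg σ⟩ u
      = ENNReal.ofReal (K * Real.exp (-u ^ 2 / (2 * v))) := by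
    intro u
    simp only [gaussianPDF, gaussianPDFReal, NNReal.coe_mk, sub_zero, hK, one_div]
    rfl
  have key : ∀ u : ℝ,
      (gaussianPDF 0 ⟨σ ^ 2, sq_nonneg σ⟩
          * fun u => ENNReal.ofReal (Real.exp (-(s * (c + u) ^ 2)))) u
        = ENNReal.ofReal (Real.exp (-k)) * ENNReal.ofReal (K * Real.exp (-(B * (u + m) ^ 2))) := by
    intro u
    have hexp : -u ^ 2 / (2 * v) + -(s * (c + u) ^ 2) = -k + -(B * (u + m) ^ 2) := by
      rw [hB, hm, hk, hB]
      field_simp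
      ring
    have hre : K * Real.exp (-u ^ 2 / (2 * v)) * Real.exp (-(s * (c + u) ^ 2))
        = Real.exp (-k) * (K * Real.exp (-(B * (u + m) ^ 2))) := by
      rw [mul_assoc, ← Real.exp_add, hexp, Real.exp_add]
      ring
    simp only [Pi.mul_apply, pdf_eq]
    rw [← ENNReal.ofReal_mul (mul_nonneg hK0 (Real.exp_nonneg _)), hre,
      ENNReal.ofReal_mul (Real.exp_nonneg (-k))]
  have key0 : ∀ u : ℝ,
      (gaussianPDF 0 ⟨σ ^ 2, sq_nonneg σ⟩
          * fun u => ENNReal.ofReal (Real.exp (-(s * u ^ 2)))) u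
        = ENNReal.ofReal (K * Real.exp (-(B * u ^ 2))) := by
    intro u
    have hexp : -u ^ 2 / (2 * v) + -(s * u ^ 2) = -(B * u ^ 2) := by
      rw [hB]; field_simp; ring
    simp only [Pi.mul_apply, pdf_eq]
    rw [← ENNReal.ofReal_mul (mul_nonneg hK0 (Real.exp_nonneg _)), mul_assoc, ← Real.exp_add, hexp]
  simp only [lintegral_congr key, lintegral_congr key0]
  rw [lintegral_const_mul _ (by fun_prop)]
  calc ENNReal.ofReal (Real.exp (-k))
        * ∫⁻ u, ENNReal.ofReal (K * Real.exp (-(B * (u + m) ^ 2)))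
      ≤ 1 * ∫⁻ u, ENNReal.ofReal (K * Real.exp (-(B * (u + m) ^ 2))) := by
        gcongr
        simpa using ENNReal.ofReal_le_ofReal (Real.exp_le_one_iff.mpr (neg_nonpos.mpr hk0))
    _ = ∫⁻ u, ENNReal.ofReal (K * Real.exp (-(B * u ^ 2))) := by
        rw [one_mul]
        exact lintegral_add_right_eq_self
          (fun u => ENNReal.ofReal (K * Real.exp (-(B * u ^ 2)))) m

lemma rep_inv_sqrt {a : ℝ} (ha : 0 < a) :
    ∫⁻ t in Set.Ioi (0:ℝ), ENNReal.ofReal (Real.exp (-(a * t ^ 2)))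
      = ENNReal.ofReal (Real.sqrt π / 2) * ENNReal.ofReal ((Real.sqrt a)⁻¹) := by
  have hint : IntegrableOn (fun t : ℝ => Real.exp (-(a * t ^ 2))) (Set.Ioi 0) := by
    simpa [neg_mul] using (integrable_exp_neg_mul_sq ha).integrableOn
  rw [← ofReal_integral_eq_lintegral_ofReal hint (ae_of_all _ fun t => Real.exp_nonneg _)]
  have h1 : ∫ t in Set.Ioi (0:ℝ), Real.exp (-(a * t ^ 2)) = Real.sqrt (π / a) / 2 := by
    simpa [neg_mul] using integral_gaussian_Ioi a
  have h2 : Real.sqrt (π / a) / 2 = Real.sqrt π / 2 * (Real.sqrt a)⁻¹ := by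
    rw [Real.sqrt_div pi_pos.le]
    ring
  rw [h1, h2, ENNReal.ofReal_mul (by positivity)]

lemma inv_sqrt_eq {a : ℝ} (ha : 0 < a) :
    ENNReal.ofReal ((Real.sqrt a)⁻¹)
      = (ENNReal.ofReal (Real.sqrt π / 2))⁻¹ *
        ∫⁻ t in Set.Ioi (0:ℝ), ENNReal.ofReal (Real.exp (-(a * t ^ 2))) := by
  have hc : (0:ℝ) < Real.sqrt π / 2 := by
    have := Real.sqrt_pos.mpr pi_pos
    linarith
  rw [rep_inv_sqrt ha, ← mul_assoc,
    ENNReal.inv_mul_cancel (ne_of_gt (ENNReal.ofReal_pos.mpr hc)) ENNReal.ofReal_ne_top, one_mul]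

lemma lint_factor {D : ℕ} {σ : ℝ} (hσ : 0 < σ) (x : Fin D → ℝ) (t : ℝ) :
    ∫⁻ g : Fin D → ℝ, ENNReal.ofReal (Real.exp (-((∑ i, (x i + g i) ^ 2) * t ^ 2)))
        ∂(gaussPi D σ)
      = ∏ i, ∫⁻ u, ENNReal.ofReal (Real.exp (-(t ^ 2 * (x i + u) ^ 2)))
          ∂(gaussianReal 0 ⟨σ ^ 2, sq_nonneg σ⟩) := by
  have hpt : ∀ g : Fin D → ℝ, ENNReal.ofReal (Real.exp (-((∑ i, (x i + g i) ^ 2) * t ^ 2)))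
      = ∏ i, ENNReal.ofReal (Real.exp (-(t ^ 2 * (x i + g i) ^ 2))) := by
    intro g
    rw [← ENNReal.ofReal_prod_of_nonneg (fun i _ => Real.exp_nonneg _), ← Real.exp_sum]
    congr 2
    rw [Finset.sum_neg_distrib, neg_inj, Finset.sum_mul]
    exact Finset.sum_congr rfl fun i _ => mul_comm _ _
  simp_rw [hpt]
  haveI := instIsProbabilityMeasureGaussianReal 0 ⟨σ ^ 2, sq_nonneg σ⟩
  exact my_lintegral_pi_prod (gaussianReal 0 ⟨σ ^ 2, sq_nonneg σ⟩)
    (fun i u => ENNReal.ofReal (Real.exp (-(t ^ 2 * (x i + u) ^ 2)))) (fun i => by fun_prop)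

lemma gaussPi_meas_pos {D : ℕ} (hD : 1 ≤ D) {σ : ℝ} (hσ : 0 < σ) (x : Fin D → ℝ) :
    ∀ᵐ g ∂(gaussPi D σ), 0 < ∑ i, (x i + g i) ^ 2 := by
  have hσ2 : (0:ℝ) < σ ^ 2 := by positivity
  have hv : (⟨σ ^ 2, sq_nonneg σ⟩ : ℝ≥0) ≠ 0 := fun h =>
    hσ2.ne' (congrArg NNReal.toReal h)
  have hγ : ∀ a : ℝ, (gaussianReal 0 ⟨σ ^ 2, sq_nonneg σ⟩) {a} = 0 := by
    intro a
    rw [gaussianReal_of_var_ne_zero _ hv]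
    exact withDensity_absolutelyContinuous _ _ (measure_singleton _)
  have hnull : gaussPi D σ {fun i => -x i} = 0 := by
    haveI := instIsProbabilityMeasureGaussianReal 0 ⟨σ ^ 2, sq_nonneg σ⟩
    rw [gaussPi, ← Set.univ_pi_singleton, Measure.pi_pi]
    exact Finset.prod_eq_zero (Finset.mem_univ (⟨0, Nat.lt_of_lt_of_le Nat.zero_lt_one hD⟩ : Fin D))
      (hγ _)
  rw [ae_iff]
  refine measure_mono_null ?_ hnull
  intro g hg
  simp only [Set.mem_setOf_eq, not_lt] at hg
  have hnn : ∀ j ∈ Finset.univ, (0:ℝ) ≤ (x j + g j) ^ 2 := fun j _ => sq_nonneg _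
  have hz : ∀ i, x i + g i = 0 := by
    intro i
    have h0 := (Finset.sum_eq_zero_iff_of_nonneg hnn).mp
      (le_antisymm hg (Finset.sum_nonneg hnn)) i (Finset.mem_univ i)
    exact pow_eq_zero_iff (two_ne_zero) |>.mp h0
  exact Set.mem_singleton_iff.mpr (funext fun i => by have := hz i; linarith)

lemma L_eq {D : ℕ} (hD : 1 ≤ D) {σ : ℝ} (hσ : 0 < σ) (x : Fin D → ℝ) :
    ∫⁻ g, ENNReal.ofReal ((Real.sqrt (∑ i, (x i + g i) ^ 2))⁻¹) ∂(gaussPi D σ)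
      = (ENNReal.ofReal (Real.sqrt π / 2))⁻¹ *
        ∫⁻ t in Set.Ioi (0:ℝ),
          ∏ i, ∫⁻ u, ENNReal.ofReal (Real.exp (-(t ^ 2 * (x i + u) ^ 2)))
            ∂(gaussianReal 0 ⟨σ ^ 2, sq_nonneg σ⟩) := by
  have hpi : IsProbabilityMeasure (gaussPi D σ) := by
    haveI := instIsProbabilityMeasureGaussianReal 0 ⟨σ ^ 2, sq_nonneg σ⟩
    rw [gaussPi]; infer_instance
  have h1 : ∫⁻ g, ENNReal.ofReal ((Real.sqrt (∑ i, (x i + g i) ^ 2))⁻¹) ∂(gaussPi D σ)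
      = ∫⁻ g, (ENNReal.ofReal (Real.sqrt π / 2))⁻¹ *
          (∫⁻ t in Set.Ioi (0:ℝ),
            ENNReal.ofReal (Real.exp (-((∑ i, (x i + g i) ^ 2) * t ^ 2)))) ∂(gaussPi D σ) := by
    refine lintegral_congr_ae ?_
    filter_upwards [gaussPi_meas_pos hD hσ x] with g hg
    exact inv_sqrt_eq hg
  rw [h1, lintegral_const_mul' _ _
    (ENNReal.inv_ne_top.mpr (ne_of_gt (ENNReal.ofReal_pos.mpr (by positivity))))]
  congr 1
  rw [lintegral_lintegral_swap (by fun_prop)]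
  exact lintegral_congr fun t => lint_factor hσ x t

lemma L_mono {D : ℕ} (hD : 1 ≤ D) {σ : ℝ} (hσ : 0 < σ) (x : Fin D → ℝ) :
    ∫⁻ g, ENNReal.ofReal ((Real.sqrt (∑ i, (x i + g i) ^ 2))⁻¹) ∂(gaussPi D σ)
      ≤ ∫⁻ g, ENNReal.ofReal ((Real.sqrt (∑ i, (g i) ^ 2))⁻¹) ∂(gaussPi D σ) := by
  have h0 := L_eq hD hσ (0 : Fin D → ℝ)
  simp only [Pi.zero_apply, zero_add] at h0
  rw [L_eq hD hσ x, h0]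
  refine mul_le_mul_right (lintegral_mono fun t => ?_) _
  refine Finset.prod_le_prod' fun i _ => ?_
  have := one_dim_le hσ (t ^ 2) (x i) (sq_nonneg t)
  exact this

lemma L0_fin {D : ℕ} (hD : 2 ≤ D) {σ : ℝ} (hσ : 0 < σ) :
    ∫⁻ g, ENNReal.ofReal ((Real.sqrt (∑ i, (g i) ^ 2))⁻¹) ∂(gaussPi D σ) < ⊤ := by
  have h1D : 1 ≤ D := le_trans one_le_two hD
  have h0 := L_eq h1D hσ (0 : Fin D → ℝ)
  simp only [Pi.zero_apply, zero_add] at h0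
  rw [h0]
  set γ := gaussianReal 0 (⟨σ ^ 2, sq_nonneg σ⟩ : ℝ≥0) with hγdef
  have hγp : IsProbabilityMeasure γ := by rw [hγdef]; exact instIsProbabilityMeasureGaussianReal _ _
  set J : ℝ → ℝ≥0∞ := fun t => ∫⁻ u, ENNReal.ofReal (Real.exp (-(t ^ 2 * u ^ 2))) ∂γ with hJ
  set K : ℝ := (Real.sqrt (2 * π * σ ^ 2))⁻¹ with hK
  have hK0 : 0 ≤ K := by positivity
  set C : ℝ := K * Real.sqrt π with hC
  have hC0 : 0 ≤ C := by positivity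
  have hσ2 : (0:ℝ) < σ ^ 2 := by positivity
  have hv : (⟨σ ^ 2, sq_nonneg σ⟩ : ℝ≥0) ≠ 0 := fun h =>
    hσ2.ne' (congrArg NNReal.toReal h)
  have Jle1 : ∀ t : ℝ, J t ≤ 1 := by
    intro t
    calc J t ≤ ∫⁻ _, 1 ∂γ := lintegral_mono fun u =>
          ENNReal.ofReal_le_one.mpr (Real.exp_le_one_iff.mpr (neg_nonpos.mpr (by positivity)))
      _ = 1 := by simp
  have JleC : ∀ t : ℝ, 0 < t → J t ≤ ENNReal.ofReal (C / t) := by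
    intro t ht
    have ht2 : (0:ℝ) < t ^ 2 := by positivity
    have hgauss : ∫⁻ u : ℝ, ENNReal.ofReal (Real.exp (-(t ^ 2 * u ^ 2)))
        = ENNReal.ofReal (Real.sqrt (π / t ^ 2)) := by
      rw [← ofReal_integral_eq_lintegral_ofReal
        (by simpa [neg_mul] using integrable_exp_neg_mul_sq ht2)
        (ae_of_all _ fun u => Real.exp_nonneg _)]
      congr 1
      simpa [neg_mul] using integral_gaussian (t ^ 2)
    have hpdf : ∀ u : ℝ, gaussianPDF 0 ⟨σ ^ 2, sq_nonneg σ⟩ u ≤ ENNReal.ofReal K := by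
      intro u
      refine ENNReal.ofReal_le_ofReal ?_
      have h1 : Real.exp (-(u - 0) ^ 2 / (2 * (σ ^ 2))) ≤ 1 :=
        Real.exp_le_one_iff.mpr
          (div_nonpos_of_nonpos_of_nonneg (neg_nonpos.mpr (by positivity)) (by positivity))
      calc gaussianPDFReal 0 ⟨σ ^ 2, sq_nonneg σ⟩ u
          = K * Real.exp (-(u - 0) ^ 2 / (2 * (σ ^ 2))) := by
            simp only [gaussianPDFReal, NNReal.coe_mk, one_div, hK]
            rfl
        _ ≤ K * 1 := by nlinarith [Real.exp_nonneg (-(u - 0) ^ 2 / (2 * (σ ^ 2)))]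
        _ = K := mul_one K
    have hJt : J t ≤ ENNReal.ofReal K * ENNReal.ofReal (Real.sqrt (π / t ^ 2)) := by
      show (∫⁻ u, ENNReal.ofReal (Real.exp (-(t ^ 2 * u ^ 2))) ∂γ) ≤ _
      rw [hγdef, gaussianReal_of_var_ne_zero _ hv,
        lintegral_withDensity_eq_lintegral_mul _ (measurable_gaussianPDF 0 (⟨σ ^ 2, sq_nonneg σ⟩ : ℝ≥0)) (by fun_prop)]
      calc ∫⁻ u, (gaussianPDF 0 ⟨σ ^ 2, sq_nonneg σ⟩
              * fun u => ENNReal.ofReal (Real.exp (-(t ^ 2 * u ^ 2)))) u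
          ≤ ∫⁻ u, ENNReal.ofReal K * ENNReal.ofReal (Real.exp (-(t ^ 2 * u ^ 2))) := by
            refine lintegral_mono fun u => ?_
            exact mul_le_mul_left (hpdf u) _
        _ = ENNReal.ofReal K * ∫⁻ u, ENNReal.ofReal (Real.exp (-(t ^ 2 * u ^ 2))) :=
            lintegral_const_mul' _ _ ENNReal.ofReal_ne_top
        _ = ENNReal.ofReal K * ENNReal.ofReal (Real.sqrt (π / t ^ 2)) := by rw [hgauss]
    refine hJt.trans ?_
    rw [← ENNReal.ofReal_mul hK0]
    refine ENNReal.ofReal_le_ofReal ?_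
    rw [Real.sqrt_div pi_pos.le, Real.sqrt_sq ht.le, hC]
    rw [mul_div_assoc]
  have hbd : ∀ t ∈ Set.Ioi (0:ℝ), (∏ _i : Fin D, J t)
      ≤ ENNReal.ofReal ((1 + C ^ 2) * (1 + t ^ 2)⁻¹) := by
    intro t ht
    replace ht : (0:ℝ) < t := ht
    have h2 : (∏ _i : Fin D, J t) ≤ J t ^ 2 := by
      rw [Finset.prod_const, Finset.card_univ, Fintype.card_fin]
      exact pow_le_pow_right_of_le_one' (Jle1 t) hD
    refine h2.trans ?_
    rcases le_or_gt t C with h | h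
    · calc J t ^ 2 ≤ 1 ^ 2 := pow_le_pow_left' (Jle1 t) 2
        _ = 1 := one_pow 2
        _ ≤ ENNReal.ofReal ((1 + C ^ 2) * (1 + t ^ 2)⁻¹) := by
            refine ENNReal.one_le_ofReal.mpr ?_
            rw [le_mul_inv_iff₀ (by positivity), one_mul]
            nlinarith
    · calc J t ^ 2 ≤ ENNReal.ofReal (C / t) ^ 2 := pow_le_pow_left' (JleC t ht) 2
        _ = ENNReal.ofReal ((C / t) ^ 2) := (ENNReal.ofReal_pow (by positivity) 2).symm
        _ ≤ ENNReal.ofReal ((1 + C ^ 2) * (1 + t ^ 2)⁻¹) := by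
            refine ENNReal.ofReal_le_ofReal ?_
            rw [div_pow, ← div_eq_mul_inv, div_le_div_iff₀ (by positivity) (by positivity)]
            nlinarith [mul_pos (sub_pos.mpr h) (lt_of_le_of_lt hC0 h : (0:ℝ) < t)]
  have hfin2 : ∫⁻ t : ℝ, ENNReal.ofReal ((1 + t ^ 2)⁻¹) < ⊤ := by
    have hint := integrable_inv_one_add_sq.hasFiniteIntegral
    rwa [hasFiniteIntegral_iff_ofReal (ae_of_all _ fun t => by positivity)] at hint
  refine ENNReal.mul_lt_top (ENNReal.inv_lt_top.mpr ?_) ?_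
  · exact ENNReal.ofReal_pos.mpr (by positivity)
  · calc ∫⁻ t in Set.Ioi (0:ℝ), ∏ _i : Fin D, J t
        ≤ ∫⁻ t in Set.Ioi (0:ℝ), ENNReal.ofReal ((1 + C ^ 2) * (1 + t ^ 2)⁻¹) :=
          setLIntegral_mono (by fun_prop) hbd
      _ ≤ ∫⁻ t : ℝ, ENNReal.ofReal ((1 + C ^ 2) * (1 + t ^ 2)⁻¹) :=
          setLIntegral_le_lintegral _ _
      _ = ENNReal.ofReal (1 + C ^ 2) * ∫⁻ t : ℝ, ENNReal.ofReal ((1 + t ^ 2)⁻¹) := by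
          simp_rw [ENNReal.ofReal_mul (by positivity : (0:ℝ) ≤ 1 + C ^ 2)]
          exact lintegral_const_mul' _ _ ENNReal.ofReal_ne_top
      _ < ⊤ := ENNReal.mul_lt_top ENNReal.ofReal_lt_top hfin2

end AuxSqrtInvShift

/-- for `D ≥ 2`, a centered Gaussian vector `g` in `ℝ^D` with i.i.d.
`N(0,σ²)` coordinates, and any fixed `x ∈ ℝ^D`, `E[1/‖x+g‖₂] ≤ E[1/‖g‖₂]`. -/
theorem expected_inv_norm_shift_le (D : ℕ) (hD : 2 ≤ D) (σ : ℝ) (hσ : 0 < σ)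
    (x : Fin D → ℝ) :
    (∫ g, (Real.sqrt (∑ i, (x i + g i) ^ 2))⁻¹ ∂(gaussPi D σ)) ≤
      ∫ g, (Real.sqrt (∑ i, (g i) ^ 2))⁻¹ ∂(gaussPi D σ) := by
  have h1D : 1 ≤ D := le_trans one_le_two hD
  rw [integral_eq_lintegral_of_nonneg_ae (ae_of_all _ fun g => by positivity)
      (Measurable.aestronglyMeasurable (by fun_prop)),
    integral_eq_lintegral_of_nonneg_ae (ae_of_all _ fun g => by positivity)
      (Measurable.aestronglyMeasurable (by fun_prop))]
  exact ENNReal.toReal_mono (ne_of_lt (L0_fin hD hσ)) (L_mono h1D hσ x)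
end

section
/- There exists an absolute constant C > 0 such that for all D ≥ 2, all σ > 0, and all x ∈ [-1,1]^D, if g is a random vector in ℝ^D whose coordinates are independent centered Gaussians of variance σ², then √D · E[1/‖x + g‖₂] ≤ C/σ. -/
open MeasureTheory ProbabilityTheory

open Real Set NNReal ENNReal

section Aux

lemma integral_pi_prod {D : ℕ} (μ : Measure ℝ) [SigmaFinite μ] (f : Fin D → ℝ → ℝ) :
    ∫ g : Fin D → ℝ, ∏ i, f i (g i) ∂(Measure.pi fun _ => μ) = ∏ i, ∫ x, f i x ∂μ := by
  letI : MeasureSpace ℝ := ⟨μ⟩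
  exact MeasureTheory.integral_fintype_prod_eq_prod (μ := fun _ => μ) f

lemma gauss_exp_bound {v : ℝ≥0} (hv : 0 < (v : ℝ)) {t : ℝ} (ht : 0 < t) (c : ℝ) :
    ∫ g, Real.exp (-((c + g) ^ 2 * t)) ∂(gaussianReal 0 v) ≤ (Real.sqrt (1 + 2 * v * t))⁻¹ := by
  have hv' : v ≠ 0 := by exact_mod_cast hv.ne'
  set k : ℝ := (2 * (v:ℝ))⁻¹ with hk
  have hkpos : 0 < k := by positivity
  set a : ℝ := t + k with ha
  have hapos : 0 < a := by positivity
  set b : ℝ := t * c / a with hb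
  have hab : a * b = t * c := by rw [hb]; field_simp [hapos.ne']
  -- rewrite the Gaussian integral as a Lebesgue integral against the density
  rw [gaussianReal_of_var_ne_zero 0 hv',
    show gaussianPDF 0 v = fun x => ((Real.toNNReal (gaussianPDFReal 0 v x) : ℝ≥0) : ℝ≥0∞) from rfl,
    integral_withDensity_eq_integral_smul (by
      exact (measurable_gaussianPDFReal 0 v).real_toNNReal) _]
  have hpt : ∀ g : ℝ, (Real.toNNReal (gaussianPDFReal 0 v g)) • Real.exp (-((c + g) ^ 2 * t))
      ≤ (Real.sqrt (2 * π * v))⁻¹ * Real.exp (-(a * (g + b) ^ 2)) := by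
    intro g
    rw [NNReal.smul_def, smul_eq_mul, Real.coe_toNNReal _ (gaussianPDFReal_nonneg 0 v g)]
    rw [gaussianPDFReal]
    rw [mul_assoc, ← Real.exp_add]
    refine mul_le_mul_of_nonneg_left (Real.exp_le_exp.2 ?_) (by positivity)
    -- exponent inequality
    have key : a * (-(g - 0) ^ 2 / (2 * v) + -((c + g) ^ 2 * t)) + (a * g + t * c) ^ 2
        = -(t * k * c ^ 2) := by
      rw [ha, hk]; field_simp; ring
    have h2 : a * (a * (g + b) ^ 2) = (a * g + t * c) ^ 2 := by
      have : a * (g + b) = a * g + t * c := by rw [mul_add, hab]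
      calc a * (a * (g + b)^2) = (a * (g+b))^2 := by ring
        _ = _ := by rw [this]
    have h3 : a * (-(g - 0) ^ 2 / (2 * v) + -((c + g) ^ 2 * t)) ≤ a * (-(a * (g + b) ^ 2)) := by
      have h5 : (0:ℝ) ≤ t * k * c ^ 2 := by positivity
      clear_value b a k
      have h6 : a * (a * b) * g = a * (t * c) * g := by rw [hab]
      have h7 : a * b * (a * b) = t * c * (t * c) := by rw [hab]
      nlinarith [key, h2, h5, h6, h7]
    exact le_of_mul_le_mul_left (by linarith) hapos
  have hint : Integrable (fun g : ℝ => (Real.sqrt (2 * π * v))⁻¹ * Real.exp (-(a * (g + b) ^ 2))) := by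
    refine Integrable.const_mul ?_ _
    have := (integrable_exp_neg_mul_sq hapos).comp_add_right b
    simpa [neg_mul] using this
  calc ∫ g, (Real.toNNReal (gaussianPDFReal 0 v g)) • Real.exp (-((c + g) ^ 2 * t))
      ≤ ∫ g, (Real.sqrt (2 * π * v))⁻¹ * Real.exp (-(a * (g + b) ^ 2)) := by
        refine integral_mono_of_nonneg (ae_of_all _ fun g => ?_) hint (ae_of_all _ hpt)
        positivity
    _ = (Real.sqrt (2 * π * v))⁻¹ * ∫ g : ℝ, Real.exp (-(a * g ^ 2)) := by
        rw [integral_const_mul]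
        congr 1
        exact integral_add_right_eq_self (fun g : ℝ => Real.exp (-(a * g ^ 2))) b
    _ = (Real.sqrt (2 * π * v))⁻¹ * Real.sqrt (π / a) := by
        rw [← integral_gaussian]
        congr 1
        simp only [neg_mul]
    _ = (Real.sqrt (1 + 2 * v * t))⁻¹ := by
        rw [← Real.sqrt_inv, ← Real.sqrt_mul (by positivity), ← Real.sqrt_inv]
        congr 1
        rw [ha, hk]
        field_simp
        ring
lemma integrableOn_rpow_exp {s : ℝ} (hs : 0 < s) :
    IntegrableOn (fun t : ℝ => t ^ (-(1/2) : ℝ) * Real.exp (-(s * t))) (Ioi 0) := by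
  have := integrableOn_rpow_mul_exp_neg_mul_rpow (p := 1) (s := -(1/2)) (b := s)
    (by norm_num) one_pos hs
  refine this.congr_fun (fun t ht => ?_) measurableSet_Ioi
  dsimp only
  rw [Real.rpow_one, neg_mul]

lemma sqrt_inv_le_lintegral {s : ℝ} (hs : 0 ≤ s) :
    ENNReal.ofReal (Real.sqrt s)⁻¹ ≤ ENNReal.ofReal (Real.sqrt π)⁻¹ *
      ∫⁻ t in Ioi (0:ℝ), ENNReal.ofReal (t ^ (-(1/2) : ℝ) * Real.exp (-(s * t))) := by
  rcases eq_or_lt_of_le hs with h | hs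
  · simp [← h]
  have hnn : 0 ≤ᵐ[volume.restrict (Ioi (0:ℝ))]
      fun t : ℝ => t ^ (-(1/2) : ℝ) * Real.exp (-(s * t)) := by
    filter_upwards [ae_restrict_mem measurableSet_Ioi] with t ht
    have : (0:ℝ) < t := ht
    positivity
  rw [← ofReal_integral_eq_lintegral_ofReal (integrableOn_rpow_exp hs) hnn,
    ← ENNReal.ofReal_mul (by positivity)]
  apply le_of_eq
  congr 1
  have hval : ∫ t in Ioi (0:ℝ), t ^ (-(1/2) : ℝ) * Real.exp (-(s * t))
      = (1 / s) ^ ((1:ℝ)/2) * Real.Gamma (1/2) := by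
    have := integral_rpow_mul_exp_neg_mul_Ioi (a := 1/2) (r := s) one_half_pos hs
    rw [← this]
    norm_num
  rw [hval, Real.Gamma_one_half_eq, ← Real.sqrt_eq_rpow, one_div s, Real.sqrt_inv]
  have hπ : Real.sqrt π ≠ 0 := by positivity
  field_simp
-- exp(u/2) ≤ 1 + u on [0,2]
lemma exp_half_le {u : ℝ} (h0 : 0 ≤ u) (h2 : u ≤ 2) : Real.exp (u / 2) ≤ 1 + u := by
  have hc := convexOn_exp.2 (mem_univ (0:ℝ)) (mem_univ (1:ℝ))
    (show (0:ℝ) ≤ 1 - u/2 by linarith) (show (0:ℝ) ≤ u/2 by linarith) (by ring)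
  simp only [smul_eq_mul, mul_zero, mul_one, zero_add, Real.exp_zero] at hc
  have he : Real.exp 1 ≤ 3 := by
    have := Real.exp_one_lt_d9
    linarith
  nlinarith [hc, h0]

-- 2/(D-1) * 2^(-((D-1)/2)) ≤ 3/√D for D ≥ 2
lemma tail_nat_bound {D : ℕ} (hD : 2 ≤ D) :
    2 / ((D:ℝ) - 1) * (2:ℝ) ^ (-(((D:ℝ) - 1) / 2)) ≤ 3 / Real.sqrt D := by
  obtain ⟨n, rfl⟩ : ∃ n : ℕ, D = n + 1 := ⟨D - 1, by omega⟩
  have hn : 1 ≤ n := by omega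
  have hn' : (1:ℝ) ≤ n := by exact_mod_cast hn
  have hcast : ((n + 1 : ℕ) : ℝ) - 1 = (n : ℝ) := by push_cast; ring
  have hcast2 : ((n + 1 : ℕ) : ℝ) = (n : ℝ) + 1 := by push_cast; ring
  rw [hcast, hcast2]
  have h2n : (2:ℝ) ^ (-((n:ℝ) / 2)) = (Real.sqrt (2 ^ n))⁻¹ := by
    rw [← Real.rpow_natCast 2 n, Real.sqrt_eq_rpow, ← Real.rpow_mul (by norm_num),
      ← Real.rpow_neg (by norm_num)]
    ring_nf
  rw [h2n]
  have hs2 : (0:ℝ) < Real.sqrt (2 ^ n) := Real.sqrt_pos.2 (by positivity)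
  have hsD : (0:ℝ) < Real.sqrt ((n:ℝ) + 1) := Real.sqrt_pos.2 (by positivity)
  have key : 2 * Real.sqrt ((n:ℝ) + 1) ≤ 3 * n * Real.sqrt (2 ^ n) := by
    have e1 : Real.sqrt (4 * ((n:ℝ) + 1)) = 2 * Real.sqrt ((n:ℝ) + 1) := by
      rw [Real.sqrt_mul (by norm_num), show (4:ℝ) = 2^2 by norm_num,
        Real.sqrt_sq (by norm_num)]
    have e2 : Real.sqrt (9 * (n:ℝ)^2 * (2:ℝ)^n) = 3 * n * Real.sqrt (2 ^ n) := by
      rw [Real.sqrt_mul (by positivity), show (9:ℝ) * (n:ℝ)^2 = (3*(n:ℝ))^2 by ring,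
        Real.sqrt_sq (by positivity)]
    rw [← e1, ← e2]
    apply Real.sqrt_le_sqrt
    have hp : (2:ℝ) ≤ 2 ^ n := by
      calc (2:ℝ) = 2^1 := by norm_num
        _ ≤ 2^n := by exact pow_le_pow_right₀ (by norm_num) hn
    nlinarith [hn', hp]
  rw [div_mul_eq_mul_div, div_le_div_iff₀ (by positivity) hsD]
  have hinv : (Real.sqrt (2 ^ n))⁻¹ * Real.sqrt (2 ^ n) = 1 := inv_mul_cancel₀ hs2.ne'
  nlinarith [key, hinv, hs2.le, hsD.le, mul_pos hs2 hsD]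

lemma integrableOn_rpow_exp' {s : ℝ} (hs : 0 < s) :
    IntegrableOn (fun t : ℝ => t ^ (-(1/2) : ℝ) * Real.exp (-(s * t))) (Ioi 0) := by
  have := integrableOn_rpow_mul_exp_neg_mul_rpow (p := 1) (s := -(1/2)) (b := s)
    (by norm_num) one_pos hs
  refine this.congr_fun (fun t ht => ?_) measurableSet_Ioi
  dsimp only
  rw [Real.rpow_one, neg_mul]

lemma lemmaC {w : ℝ} (hw : 0 < w) {D : ℕ} (hD : 2 ≤ D) :
    (∫⁻ t in Ioi (0:ℝ),
        ENNReal.ofReal (t ^ (-(1/2) : ℝ) * ((Real.sqrt (1 + w * t))⁻¹) ^ D))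
      ≤ ENNReal.ofReal (7 / Real.sqrt (w * D)) := by
  have hDpos : (0:ℝ) < D := by positivity
  set a : ℝ := 2 / w with ha
  have hapos : 0 < a := by positivity
  have hsplit : Ioi (0:ℝ) = Ioc 0 a ∪ Ioi a := (Ioc_union_Ioi_eq_Ioi hapos.le).symm
  have hwD : (0:ℝ) < Real.sqrt (w * D) := Real.sqrt_pos.2 (by positivity)
  rw [hsplit, lintegral_union measurableSet_Ioi (Set.Ioc_disjoint_Ioi le_rfl)]
  have part1 : (∫⁻ t in Ioc (0:ℝ) a,
      ENNReal.ofReal (t ^ (-(1/2) : ℝ) * ((Real.sqrt (1 + w * t))⁻¹) ^ D))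
      ≤ ENNReal.ofReal (2 * Real.sqrt π / Real.sqrt (w * D)) := by
    have hb : (0:ℝ) < w * D / 4 := by positivity
    calc (∫⁻ t in Ioc (0:ℝ) a,
        ENNReal.ofReal (t ^ (-(1/2) : ℝ) * ((Real.sqrt (1 + w * t))⁻¹) ^ D))
        ≤ ∫⁻ t in Ioc (0:ℝ) a,
          ENNReal.ofReal (t ^ (-(1/2) : ℝ) * Real.exp (-(w * D / 4 * t))) := by
          refine lintegral_mono_ae ((ae_restrict_iff' measurableSet_Ioc).2
            (ae_of_all _ fun t ht => ?_))
          refine ENNReal.ofReal_le_ofReal ?_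
          have ht0 : 0 < t := ht.1
          have hwt0 : 0 ≤ w * t := by positivity
          have hwt2 : w * t ≤ 2 := by
            have := ht.2
            rw [ha] at this
            calc w * t ≤ w * (2 / w) := by gcongr
              _ = 2 := by field_simp
          have h1 : Real.exp (w * t / 2) ≤ 1 + w * t := exp_half_le hwt0 hwt2
          have h2 : Real.exp (w * t / 4) ≤ Real.sqrt (1 + w * t) := by
            rw [show Real.sqrt (1 + w*t) = √(1+w*t) from rfl]
            refine Real.le_sqrt' (Real.exp_pos _) |>.2 ?_
            calc Real.exp (w*t/4) ^ 2 = Real.exp (w*t/2) := by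
                  rw [← Real.exp_nat_mul]
                  congr 1
                  push_cast
                  ring
              _ ≤ 1 + w * t := h1
          have h3 : (Real.sqrt (1 + w * t))⁻¹ ≤ Real.exp (-(w * t / 4)) := by
            rw [Real.exp_neg]
            exact inv_anti₀ (Real.exp_pos _) h2
          have h4 : ((Real.sqrt (1 + w * t))⁻¹) ^ D ≤ Real.exp (-(w * D / 4 * t)) := by
            calc ((Real.sqrt (1 + w * t))⁻¹) ^ D ≤ (Real.exp (-(w * t / 4))) ^ D :=
                pow_le_pow_left₀ (by positivity) h3 D
              _ = Real.exp (-(w * D / 4 * t)) := by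
                rw [← Real.exp_nat_mul]; ring_nf
          have h5 : (0:ℝ) ≤ t ^ (-(1/2) : ℝ) := by positivity
          exact mul_le_mul_of_nonneg_left h4 h5
      _ ≤ ∫⁻ t in Ioi (0:ℝ),
          ENNReal.ofReal (t ^ (-(1/2) : ℝ) * Real.exp (-(w * D / 4 * t))) :=
          lintegral_mono_set Ioc_subset_Ioi_self
      _ = ENNReal.ofReal (∫ t in Ioi (0:ℝ), t ^ (-(1/2) : ℝ) * Real.exp (-(w * D / 4 * t))) := by
          rw [← ofReal_integral_eq_lintegral_ofReal (integrableOn_rpow_exp' hb) ?_]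
          filter_upwards [ae_restrict_mem measurableSet_Ioi] with t ht
          have : (0:ℝ) < t := ht
          positivity
      _ ≤ ENNReal.ofReal (2 * Real.sqrt π / Real.sqrt (w * D)) := by
          refine ENNReal.ofReal_le_ofReal ?_
          have hval := integral_rpow_mul_exp_neg_mul_Ioi (a := 1/2) (r := w * D / 4)
            one_half_pos hb
          have : ∫ t in Ioi (0:ℝ), t ^ (-(1/2) : ℝ) * Real.exp (-(w * D / 4 * t))
              = (1 / (w * D / 4)) ^ ((1:ℝ)/2) * Real.Gamma (1/2) := by
            rw [← hval]; norm_num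
          rw [this, Real.Gamma_one_half_eq, ← Real.sqrt_eq_rpow,
            show (1:ℝ) / (w * D / 4) = 4 / (w * D) by ring,
            Real.sqrt_div (by norm_num : (0:ℝ) ≤ 4) (w * D),
            show Real.sqrt 4 = 2 by
              rw [show (4:ℝ) = 2^2 by norm_num, Real.sqrt_sq (by norm_num)]]
          exact le_of_eq (by ring)
  have part2 : (∫⁻ t in Ioi a,
      ENNReal.ofReal (t ^ (-(1/2) : ℝ) * ((Real.sqrt (1 + w * t))⁻¹) ^ D))
      ≤ ENNReal.ofReal (3 / Real.sqrt (w * D)) := by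
    set r : ℝ := -(((D:ℝ) + 1) / 2) with hr
    have hD2 : (2:ℝ) ≤ (D:ℝ) := by exact_mod_cast hD
    have hrlt : r < -1 := by rw [hr]; linarith
    have hint : IntegrableOn (fun t : ℝ => w ^ (-((D:ℝ)/2)) * t ^ r) (Ioi a) :=
      (integrableOn_Ioi_rpow_of_lt hrlt hapos).const_mul _
    calc (∫⁻ t in Ioi a,
        ENNReal.ofReal (t ^ (-(1/2) : ℝ) * ((Real.sqrt (1 + w * t))⁻¹) ^ D))
        ≤ ∫⁻ t in Ioi a, ENNReal.ofReal (w ^ (-((D:ℝ)/2)) * t ^ r) := by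
          refine lintegral_mono_ae ((ae_restrict_iff' measurableSet_Ioi).2
            (ae_of_all _ fun t ht => ?_))
          refine ENNReal.ofReal_le_ofReal ?_
          have ht0 : (0:ℝ) < t := hapos.trans ht
          have hwt : (0:ℝ) < w * t := by positivity
          have m1 : ((Real.sqrt (1 + w * t))⁻¹) ^ D ≤ ((Real.sqrt (w * t))⁻¹) ^ D := by
            refine pow_le_pow_left₀ (by positivity) ?_ D
            exact inv_anti₀ (Real.sqrt_pos.2 hwt) (Real.sqrt_le_sqrt (by linarith))
          have m2 : ((Real.sqrt (w * t))⁻¹) ^ D = w ^ (-((D:ℝ)/2)) * t ^ (-((D:ℝ)/2)) := by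
            rw [Real.sqrt_eq_rpow, ← Real.rpow_neg hwt.le,
              ← Real.rpow_natCast ((w*t) ^ (-(1/2) : ℝ)) D, ← Real.rpow_mul hwt.le,
              show -(1/2) * (D:ℝ) = -((D:ℝ)/2) by ring, Real.mul_rpow hw.le ht0.le]
          have m3 : t ^ (-(1/2) : ℝ) * t ^ (-((D:ℝ)/2)) = t ^ r := by
            rw [← Real.rpow_add ht0, hr]; ring_nf
          calc t ^ (-(1/2) : ℝ) * ((Real.sqrt (1 + w * t))⁻¹) ^ D
              ≤ t ^ (-(1/2) : ℝ) * ((Real.sqrt (w * t))⁻¹) ^ D := by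
                refine mul_le_mul_of_nonneg_left m1 (by positivity)
            _ = w ^ (-((D:ℝ)/2)) * t ^ r := by rw [m2, ← m3]; ring
      _ = ENNReal.ofReal (w ^ (-((D:ℝ)/2)) * ∫ t in Ioi a, t ^ r) := by
          rw [← ofReal_integral_eq_lintegral_ofReal hint ?_, MeasureTheory.integral_const_mul]
          filter_upwards [ae_restrict_mem measurableSet_Ioi] with t ht
          have ht0 : (0:ℝ) < t := hapos.trans ht
          positivity
      _ ≤ ENNReal.ofReal (3 / Real.sqrt (w * D)) := by
          refine ENNReal.ofReal_le_ofReal ?_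
          rw [integral_Ioi_rpow_of_lt hrlt hapos]
          set m : ℝ := ((D:ℝ) - 1) / 2 with hm
          have hmpos : 0 < m := by rw [hm]; linarith
          have hr1 : r + 1 = -m := by rw [hr, hm]; ring
          have e0 : -a ^ (r+1) / (r+1) = a ^ (-m) * (2 / ((D:ℝ) - 1)) := by
            rw [hr1, hm]
            field_simp
          have e1 : a ^ (-m) = w ^ m * (2:ℝ) ^ (-m) := by
            rw [ha, Real.rpow_neg (by positivity), ← Real.inv_rpow (by positivity),
              show ((2:ℝ)/w)⁻¹ = w / 2 by field_simp,
              Real.div_rpow hw.le (by norm_num), Real.rpow_neg (by norm_num)]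
            ring
          have e2 : w ^ (-((D:ℝ)/2)) * w ^ m = (Real.sqrt w)⁻¹ := by
            rw [← Real.rpow_add hw, hm, show -((D:ℝ)/2) + ((D:ℝ)-1)/2 = -(1/2) by ring,
              Real.rpow_neg hw.le, Real.sqrt_eq_rpow]
          have e3 : Real.sqrt (w * D) = Real.sqrt w * Real.sqrt D := Real.sqrt_mul hw.le _
          calc w ^ (-((D:ℝ)/2)) * (-a ^ (r+1) / (r+1))
              = (Real.sqrt w)⁻¹ * (2 / ((D:ℝ) - 1) * (2:ℝ) ^ (-m)) := by
                rw [e0, ← mul_assoc]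
                rw [show w ^ (-((D:ℝ)/2)) * (a ^ (-m)) = (Real.sqrt w)⁻¹ * (2:ℝ)^(-m) by
                  rw [e1, ← mul_assoc, e2]]
                ring
            _ ≤ (Real.sqrt w)⁻¹ * (3 / Real.sqrt D) := by
                refine mul_le_mul_of_nonneg_left ?_ (by positivity)
                rw [hm]
                exact tail_nat_bound hD
            _ = 3 / Real.sqrt (w * D) := by
                rw [e3]
                have : Real.sqrt w ≠ 0 := by positivity
                field_simp
  calc (∫⁻ t in Ioc (0:ℝ) a,
        ENNReal.ofReal (t ^ (-(1/2) : ℝ) * ((Real.sqrt (1 + w * t))⁻¹) ^ D)) +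
      (∫⁻ t in Ioi a,
        ENNReal.ofReal (t ^ (-(1/2) : ℝ) * ((Real.sqrt (1 + w * t))⁻¹) ^ D))
      ≤ ENNReal.ofReal (2 * Real.sqrt π / Real.sqrt (w * D)) +
        ENNReal.ofReal (3 / Real.sqrt (w * D)) := add_le_add part1 part2
    _ = ENNReal.ofReal (2 * Real.sqrt π / Real.sqrt (w * D) + 3 / Real.sqrt (w * D)) := by
        rw [ENNReal.ofReal_add (by positivity) (by positivity)]
    _ ≤ ENNReal.ofReal (7 / Real.sqrt (w * D)) := by
        refine ENNReal.ofReal_le_ofReal ?_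
        have hpi : Real.sqrt π ≤ 2 := by
          rw [show (2:ℝ) = Real.sqrt 4 by
            rw [show (4:ℝ) = 2^2 by norm_num, Real.sqrt_sq (by norm_num)]]
          exact Real.sqrt_le_sqrt (by linarith [Real.pi_le_four])
        rw [← add_div, div_le_div_iff₀ hwD hwD]
        nlinarith [hwD]


lemma rpow_sqrt_congr_Ioi (F : ℝ → ℝ) :
    (∫⁻ t in Ioi (0:ℝ), ENNReal.ofReal ((Real.sqrt t)⁻¹ * F t))
      = ∫⁻ t in Ioi (0:ℝ), ENNReal.ofReal (t ^ (-(1/2) : ℝ) * F t) := by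
  refine setLIntegral_congr_fun measurableSet_Ioi (fun t ht => ?_)
  congr 2
  rw [Real.rpow_neg (le_of_lt ht), ← Real.sqrt_eq_rpow]

lemma sqrt_inv_le_lintegral' {s : ℝ} (hs : 0 ≤ s) :
    ENNReal.ofReal (Real.sqrt s)⁻¹ ≤ ENNReal.ofReal (Real.sqrt π)⁻¹ *
      ∫⁻ t in Ioi (0:ℝ), ENNReal.ofReal ((Real.sqrt t)⁻¹ * Real.exp (-(s * t))) := by
  rw [rpow_sqrt_congr_Ioi]
  exact sqrt_inv_le_lintegral hs

end Aux

/-- there is an absolute constant `C > 0` such that for all `D ≥ 2`, all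
`σ > 0` and all `x ∈ [-1,1]^D`, the smoothed expected amplitude-amplification query count
satisfies `√D · E_g[1/‖x+g‖₂] ≤ C/σ`. -/
theorem smoothed_expected_query_count :
    ∃ C : ℝ, 0 < C ∧
      ∀ (D : ℕ), 2 ≤ D → ∀ σ : ℝ, 0 < σ →
        ∀ x : Fin D → ℝ, (∀ i, |x i| ≤ 1) →
          Real.sqrt D * (∫ g, (Real.sqrt (∑ i, (x i + g i) ^ 2))⁻¹ ∂(gaussPi D σ)) ≤
            C / σ := by
  refine ⟨7, by norm_num, fun D hD σ hσ x _ => ?_⟩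
  set v : ℝ≥0 := ⟨σ ^ 2, sq_nonneg σ⟩ with hv_def
  have hvc : (v:ℝ) = σ ^ 2 := rfl
  have hv : (0:ℝ) < (v:ℝ) := by rw [hvc]; positivity
  set μ : Measure (Fin D → ℝ) := gaussPi D σ with hμ_def
  haveI : IsProbabilityMeasure μ := by
    exact Measure.pi.instIsProbabilityMeasure (fun _ : Fin D => gaussianReal 0 v)
  set S : (Fin D → ℝ) → ℝ := fun g => ∑ i, (x i + g i) ^ 2 with hS_def
  have hSm : Measurable S := by
    refine Finset.measurable_sum _ fun i _ => ?_
    exact (measurable_const.add (measurable_pi_apply i)).pow_const 2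
  have hS0 : ∀ g, 0 ≤ S g := fun g => Finset.sum_nonneg fun i _ => sq_nonneg _
  -- step E : bound on the Laplace transform of S
  have hE : ∀ t : ℝ, 0 < t →
      (∫⁻ g, ENNReal.ofReal (Real.exp (-(S g * t))) ∂μ)
        ≤ ENNReal.ofReal (((Real.sqrt (1 + 2 * (v:ℝ) * t))⁻¹) ^ D) := by
    intro t ht
    have hmeas : Measurable fun g => Real.exp (-(S g * t)) :=
      ((hSm.mul_const t).neg).exp
    have hint : Integrable (fun g => Real.exp (-(S g * t))) μ := by
      refine (integrable_const (1:ℝ)).mono' hmeas.aestronglyMeasurable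
        (ae_of_all _ fun g => ?_)
      rw [Real.norm_eq_abs, abs_of_pos (Real.exp_pos _)]
      refine Real.exp_le_one_iff.2 ?_
      have := mul_nonneg (hS0 g) ht.le
      linarith
    rw [← ofReal_integral_eq_lintegral_ofReal hint
        (ae_of_all _ fun g => (Real.exp_pos _).le)]
    refine ENNReal.ofReal_le_ofReal ?_
    have hprod : ∫ g, Real.exp (-(S g * t)) ∂μ
        = ∏ i, ∫ y, Real.exp (-((x i + y) ^ 2 * t)) ∂(gaussianReal 0 v) := by
      rw [← integral_pi_prod (gaussianReal 0 v) (fun i y => Real.exp (-((x i + y) ^ 2 * t)))]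
      rw [hμ_def, gaussPi]
      congr 1 with g
      rw [← Real.exp_sum]
      congr 1
      rw [hS_def]
      simp only [Finset.sum_mul, neg_eq_iff_eq_neg, Finset.sum_neg_distrib]
    rw [hprod]
    calc ∏ i, ∫ y, Real.exp (-((x i + y) ^ 2 * t)) ∂(gaussianReal 0 v)
        ≤ ∏ _i : Fin D, (Real.sqrt (1 + 2 * (v:ℝ) * t))⁻¹ :=
          Finset.prod_le_prod (fun i _ => integral_nonneg fun y => (Real.exp_pos _).le)
            (fun i _ => gauss_exp_bound hv ht (x i))
      _ = ((Real.sqrt (1 + 2 * (v:ℝ) * t))⁻¹) ^ D := by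
          rw [Finset.prod_const, Finset.card_univ, Fintype.card_fin]
  -- the main lintegral chain
  have hw : (0:ℝ) < 2 * σ ^ 2 := by positivity
  have hDR : (0:ℝ) < (D:ℝ) := by
    have : (0:ℕ) < D := by omega
    exact_mod_cast this
  have hφm : Measurable (Function.uncurry fun (g : Fin D → ℝ) (t : ℝ) =>
      ENNReal.ofReal ((Real.sqrt t)⁻¹ * Real.exp (-(S g * t)))) := by
    apply ENNReal.measurable_ofReal.comp
    exact ((Real.continuous_sqrt.measurable.comp measurable_snd).inv.mul
      (((hSm.comp measurable_fst).mul measurable_snd).neg.exp))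
  have main : (∫⁻ g, ENNReal.ofReal (Real.sqrt (S g))⁻¹ ∂μ)
      ≤ ENNReal.ofReal ((Real.sqrt π)⁻¹ * (7 / Real.sqrt (2 * σ ^ 2 * D))) := by
    calc (∫⁻ g, ENNReal.ofReal (Real.sqrt (S g))⁻¹ ∂μ)
        ≤ ∫⁻ g, ENNReal.ofReal (Real.sqrt π)⁻¹ *
            (∫⁻ t in Ioi (0:ℝ), ENNReal.ofReal ((Real.sqrt t)⁻¹ * Real.exp (-(S g * t)))) ∂μ :=
          lintegral_mono fun g => sqrt_inv_le_lintegral' (hS0 g)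
      _ = ENNReal.ofReal (Real.sqrt π)⁻¹ *
            ∫⁻ g, (∫⁻ t in Ioi (0:ℝ),
              ENNReal.ofReal ((Real.sqrt t)⁻¹ * Real.exp (-(S g * t)))) ∂μ :=
          lintegral_const_mul' _ _ ENNReal.ofReal_ne_top
      _ = ENNReal.ofReal (Real.sqrt π)⁻¹ *
            ∫⁻ t in Ioi (0:ℝ), (∫⁻ g,
              ENNReal.ofReal ((Real.sqrt t)⁻¹ * Real.exp (-(S g * t))) ∂μ) := by
          rw [lintegral_lintegral_swap hφm.aemeasurable]
      _ ≤ ENNReal.ofReal (Real.sqrt π)⁻¹ *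
            ∫⁻ t in Ioi (0:ℝ), ENNReal.ofReal ((Real.sqrt t)⁻¹ *
              ((Real.sqrt (1 + 2 * σ ^ 2 * t))⁻¹) ^ D) := by
          refine mul_le_mul_right (lintegral_mono_ae ((ae_restrict_iff' measurableSet_Ioi).2
            (ae_of_all _ fun t ht => ?_))) _
          have ht0 : (0:ℝ) < t := ht
          calc (∫⁻ g, ENNReal.ofReal ((Real.sqrt t)⁻¹ * Real.exp (-(S g * t))) ∂μ)
              = ENNReal.ofReal (Real.sqrt t)⁻¹ *
                  ∫⁻ g, ENNReal.ofReal (Real.exp (-(S g * t))) ∂μ := by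
                simp_rw [ENNReal.ofReal_mul (inv_nonneg.2 (Real.sqrt_nonneg t))]
                exact lintegral_const_mul' _ _ ENNReal.ofReal_ne_top
            _ ≤ ENNReal.ofReal (Real.sqrt t)⁻¹ *
                  ENNReal.ofReal (((Real.sqrt (1 + 2 * σ ^ 2 * t))⁻¹) ^ D) := by
                refine mul_le_mul_right ?_ _
                have := hE t ht0
                rwa [hvc] at this
            _ = ENNReal.ofReal ((Real.sqrt t)⁻¹ *
                  ((Real.sqrt (1 + 2 * σ ^ 2 * t))⁻¹) ^ D) :=
                (ENNReal.ofReal_mul (inv_nonneg.2 (Real.sqrt_nonneg t))).symm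
      _ = ENNReal.ofReal (Real.sqrt π)⁻¹ *
            ∫⁻ t in Ioi (0:ℝ), ENNReal.ofReal (t ^ (-(1/2) : ℝ) *
              ((Real.sqrt (1 + 2 * σ ^ 2 * t))⁻¹) ^ D) := by
          rw [rpow_sqrt_congr_Ioi]
      _ ≤ ENNReal.ofReal (Real.sqrt π)⁻¹ * ENNReal.ofReal (7 / Real.sqrt (2 * σ ^ 2 * D)) :=
          mul_le_mul_right (lemmaC hw hD) _
      _ = ENNReal.ofReal ((Real.sqrt π)⁻¹ * (7 / Real.sqrt (2 * σ ^ 2 * D))) :=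
          (ENNReal.ofReal_mul (by positivity)).symm
  -- convert the Bochner integral and finish with real arithmetic
  have hmf : AEStronglyMeasurable (fun g => (Real.sqrt (S g))⁻¹) μ :=
    ((Real.continuous_sqrt.measurable.comp hSm).inv).aestronglyMeasurable
  have hgoal : (∫ g, (Real.sqrt (∑ i, (x i + g i) ^ 2))⁻¹ ∂(gaussPi D σ))
      = (∫⁻ g, ENNReal.ofReal (Real.sqrt (S g))⁻¹ ∂μ).toReal := by
    rw [← hμ_def]
    exact integral_eq_lintegral_of_nonneg_ae
      (ae_of_all _ fun g => inv_nonneg.2 (Real.sqrt_nonneg _)) hmf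
  rw [hgoal]
  have htR : (∫⁻ g, ENNReal.ofReal (Real.sqrt (S g))⁻¹ ∂μ).toReal
      ≤ (Real.sqrt π)⁻¹ * (7 / Real.sqrt (2 * σ ^ 2 * D)) :=
    ENNReal.toReal_le_of_le_ofReal (by positivity) main
  have e1 : Real.sqrt (2 * σ ^ 2 * (D:ℝ)) = σ * Real.sqrt (2 * D) := by
    rw [show 2 * σ ^ 2 * (D:ℝ) = σ^2 * (2 * D) by ring, Real.sqrt_mul (sq_nonneg σ),
      Real.sqrt_sq hσ.le]
  have h2 : Real.sqrt (D:ℝ) ≤ Real.sqrt (2 * D) := Real.sqrt_le_sqrt (by linarith)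
  have h3 : (1:ℝ) ≤ Real.sqrt π := by
    rw [show (1:ℝ) = Real.sqrt 1 by simp]
    exact Real.sqrt_le_sqrt (by linarith [Real.pi_gt_three])
  have h2D : (0:ℝ) < Real.sqrt (2 * (D:ℝ)) := Real.sqrt_pos.2 (by linarith)
  have hπ0 : (0:ℝ) < Real.sqrt π := by linarith
  calc Real.sqrt D * (∫⁻ g, ENNReal.ofReal (Real.sqrt (S g))⁻¹ ∂μ).toReal
      ≤ Real.sqrt D * ((Real.sqrt π)⁻¹ * (7 / Real.sqrt (2 * σ ^ 2 * D))) :=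
        mul_le_mul_of_nonneg_left htR (Real.sqrt_nonneg _)
    _ = 7 * (Real.sqrt D / (Real.sqrt π * σ * Real.sqrt (2 * D))) := by
        rw [e1]; ring
    _ ≤ 7 * (1 / σ) := by
        refine mul_le_mul_of_nonneg_left ?_ (by norm_num)
        rw [div_le_div_iff₀ (by positivity) hσ]
        have hs1 : Real.sqrt (D:ℝ) * σ ≤ Real.sqrt (2*(D:ℝ)) * σ :=
          mul_le_mul_of_nonneg_right h2 hσ.le
        nlinarith [Real.sqrt_nonneg (D:ℝ), mul_pos h2D hσ]
    _ = 7 / σ := by ring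
end
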